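/- For k ≥ 1 and 1 ≤ s ≤ k, the number of binary words x of length 2k+1 with |Z(x)| = s equals C(2k+2, k-s+1). -/

import Mathlib

open Finset

/-- Number of 0's (`false`) at odd positions (1-based) of a binary word. -/
def oddZeros (x : List Bool) : ℕ :=
  ((x.zipIdx.map Prod.swap).filter (fun p => p.1 % 2 = 0 && p.2 == false)).length

/-- Number of 0's (`false`) at even positions (1-based) of a binary word. -/
def evenZeros (x : List Bool) : ℕ :=
  ((x.zipIdx.map Prod.swap).filter (fun p => p.1 % 2 = 1 && p.2 == false)).length

/-- Z(x) = odd(x) - even(x). -/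
def Zw (x : List Bool) : ℤ := (oddZeros x : ℤ) - (evenZeros x : ℤ)

/-- number of `false` values of a Boolean function -/
def cf {n : ℕ} (u : Fin n → Bool) : ℕ := (univ.filter (fun i => u i = false)).card

lemma cf_le {n : ℕ} (u : Fin n → Bool) : cf u ≤ n := by
  have := Finset.card_filter_le (univ : Finset (Fin n)) (fun i => u i = false)
  simpa [cf] using this

lemma length_filter_ofFn {n : ℕ} {α : Type*} (g : Fin n → α) (p : α → Bool) :
    ((List.ofFn g).filter p).length = (univ.filter (fun i => p (g i) = true)).card := by
  rw [List.ofFn_eq_map, List.filter_map, List.length_map]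
  simp [Finset.filter, Finset.card, Fin.univ_def, Multiset.filter]
  rfl

lemma enum_ofFn {n : ℕ} (x : Fin n → Bool) :
    (List.ofFn x).zipIdx.map Prod.swap = List.ofFn (fun i : Fin n => (i.val, x i)) := by
  apply List.ext_getElem <;> simp

lemma oddZeros_ofFn {n : ℕ} (x : Fin n → Bool) :
    oddZeros (List.ofFn x) = (univ.filter (fun i : Fin n => i.val % 2 = 0 ∧ x i = false)).card := by
  rw [oddZeros, enum_ofFn, length_filter_ofFn]
  congr 1
  apply Finset.filter_congr
  intro i _
  simp

lemma evenZeros_ofFn {n : ℕ} (x : Fin n → Bool) :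
    evenZeros (List.ofFn x) = (univ.filter (fun i : Fin n => i.val % 2 = 1 ∧ x i = false)).card := by
  rw [evenZeros, enum_ofFn, length_filter_ofFn]
  congr 1
  apply Finset.filter_congr
  intro i _
  simp

lemma card_even_false (k : ℕ) (x : Fin (2 * k + 1) → Bool) :
    (univ.filter (fun i : Fin (2 * k + 1) => i.val % 2 = 0 ∧ x i = false)).card
      = cf (fun j : Fin (k + 1) => x ⟨2 * j.val, by omega⟩) := by
  rw [cf]
  apply Finset.card_bij (fun (i : Fin (2 * k + 1)) _ => (⟨i.val / 2, by omega⟩ : Fin (k + 1)))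
  · intro i hi
    simp only [mem_filter, mem_univ, true_and] at hi ⊢
    obtain ⟨hi1, hi2⟩ := hi
    have h2 : (⟨2 * (i.val / 2), by omega⟩ : Fin (2 * k + 1)) = i := by
      apply Fin.ext
      show 2 * (i.val / 2) = i.val
      omega
    rw [h2]
    exact hi2
  · intro i hi j hj h
    simp only [mem_filter, mem_univ, true_and] at hi hj
    apply Fin.ext
    have : i.val / 2 = j.val / 2 := congrArg Fin.val h
    omega
  · intro j hj
    simp only [mem_filter, mem_univ, true_and] at hj
    refine ⟨⟨2 * j.val, by omega⟩, ?_, ?_⟩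
    · simp only [mem_filter, mem_univ, true_and]
      exact ⟨by omega, hj⟩
    · apply Fin.ext
      show 2 * j.val / 2 = j.val
      omega

lemma card_odd_false (k : ℕ) (x : Fin (2 * k + 1) → Bool) :
    (univ.filter (fun i : Fin (2 * k + 1) => i.val % 2 = 1 ∧ x i = false)).card
      = cf (fun j : Fin k => x ⟨2 * j.val + 1, by omega⟩) := by
  rw [cf]
  apply Finset.card_bij (fun (i : Fin (2 * k + 1)) hi =>
    (⟨i.val / 2, by
      have h1 : i.val % 2 = 1 := (Finset.mem_filter.mp hi).2.1
      omega⟩ : Fin k))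
  · intro i hi
    simp only [mem_filter, mem_univ, true_and] at hi ⊢
    obtain ⟨hi1, hi2⟩ := hi
    have h2 : (⟨2 * (i.val / 2) + 1, by omega⟩ : Fin (2 * k + 1)) = i := by
      apply Fin.ext
      show 2 * (i.val / 2) + 1 = i.val
      omega
    rw [h2]
    exact hi2
  · intro i hi j hj h
    simp only [mem_filter, mem_univ, true_and] at hi hj
    apply Fin.ext
    have : i.val / 2 = j.val / 2 := congrArg Fin.val h
    omega
  · intro j hj
    simp only [mem_filter, mem_univ, true_and] at hj
    refine ⟨⟨2 * j.val + 1, by omega⟩, ?_, ?_⟩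
    · simp only [mem_filter, mem_univ, true_and]
      exact ⟨by omega, hj⟩
    · apply Fin.ext
      show (2 * j.val + 1) / 2 = j.val
      omega

lemma card_cf_eq (n a : ℕ) :
    (univ.filter (fun u : Fin n → Bool => cf u = a)).card = n.choose a := by
  have hp : n.choose a = (Finset.powersetCard a (univ : Finset (Fin n))).card := by
    simp [Finset.card_powersetCard]
  rw [hp]
  apply Finset.card_bij (fun (u : Fin n → Bool) _ => univ.filter (fun i => u i = false))
  · intro u hu
    simp only [mem_filter, mem_univ, true_and] at hu
    rw [Finset.mem_powersetCard]
    exact ⟨Finset.subset_univ _, hu⟩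
  · intro u hu v hv h
    funext i
    have := Finset.ext_iff.mp h i
    simp only [mem_filter, mem_univ, true_and] at this
    cases hui : u i <;> cases hvi : v i <;> simp_all
  · intro S hS
    rw [Finset.mem_powersetCard] at hS
    refine ⟨fun i => decide (i ∉ S), ?_, ?_⟩
    · simp only [mem_filter, mem_univ, true_and]
      unfold cf
      rw [← hS.2]
      congr 1
      ext i
      simp
    · ext i
      simp

lemma card_pair_fiber (k a b : ℕ) :
    (univ.filter (fun p : (Fin (k + 1) → Bool) × (Fin k → Bool) => cf p.1 = a ∧ cf p.2 = b)).card
      = (k + 1).choose a * k.choose b := by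
  rw [← Finset.univ_product_univ,
    Finset.filter_product (fun u : Fin (k+1) → Bool => cf u = a) (fun v : Fin k → Bool => cf v = b),
    Finset.card_product, card_cf_eq, card_cf_eq]

lemma vand (m n r : ℕ) :
    ∑ b ∈ Finset.range (n + 1), m.choose (b + r) * n.choose b = (m + n).choose (n + r) := by
  have key := Finset.sum_range_add (fun i => m.choose i * n.choose (n + r - i)) r (n + 1)
  rw [Nat.add_choose_eq,
    Finset.Nat.sum_antidiagonal_eq_sum_range_succ (fun i j => m.choose i * n.choose j),
    show (n + r).succ = r + (n + 1) from by omega, key]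
  have h1 : ∑ i ∈ Finset.range r, m.choose i * n.choose (n + r - i) = 0 := by
    apply Finset.sum_eq_zero
    intro i hi
    rw [Finset.mem_range] at hi
    rw [Nat.choose_eq_zero_of_lt (show n < n + r - i by omega), mul_zero]
  rw [h1, zero_add]
  apply Finset.sum_congr rfl
  intro b hb
  rw [Finset.mem_range] at hb
  rw [show n + r - (r + b) = n - b from by omega, Nat.choose_symm (by omega), add_comm r b]

lemma card_pairs (k s : ℕ) (hs1 : 1 ≤ s) (hsk : s ≤ k) :
    (univ.filter (fun p : (Fin (k + 1) → Bool) × (Fin k → Bool) =>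
        |(cf p.1 : ℤ) - (cf p.2 : ℤ)| = (s : ℤ))).card = (2 * k + 2).choose (k - s + 1) := by
  have hsplit : (univ.filter (fun p : (Fin (k + 1) → Bool) × (Fin k → Bool) =>
      |(cf p.1 : ℤ) - (cf p.2 : ℤ)| = (s : ℤ)))
    = (univ.filter (fun p : (Fin (k + 1) → Bool) × (Fin k → Bool) => cf p.1 = cf p.2 + s))
      ∪ (univ.filter (fun p : (Fin (k + 1) → Bool) × (Fin k → Bool) => cf p.2 = cf p.1 + s)) := by
    rw [← Finset.filter_or]
    apply Finset.filter_congr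
    intro p _
    rw [abs_eq (show (0:ℤ) ≤ (s:ℤ) by positivity)]
    omega
  rw [hsplit, Finset.card_union_of_disjoint]
  · have hc1 : (univ.filter (fun p : (Fin (k + 1) → Bool) × (Fin k → Bool) =>
        cf p.1 = cf p.2 + s)).card = (2 * k + 1).choose (k + s) := by
      rw [Finset.card_eq_sum_card_fiberwise (f := fun p => cf p.2) (t := Finset.range (k + 1))
        (fun p _ => Finset.mem_range.mpr (Nat.lt_succ_of_le (cf_le p.2)))]
      have hfib : ∀ b ∈ Finset.range (k + 1),
          ((univ.filter (fun p : (Fin (k + 1) → Bool) × (Fin k → Bool) =>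
            cf p.1 = cf p.2 + s)).filter (fun p => cf p.2 = b)).card
          = (k + 1).choose (b + s) * k.choose b := by
        intro b _
        rw [Finset.filter_filter, ← card_pair_fiber k (b + s) b]
        congr 1
        apply Finset.filter_congr
        intro p _
        constructor
        · rintro ⟨h1, h2⟩; exact ⟨by omega, h2⟩
        · rintro ⟨h1, h2⟩; exact ⟨by omega, h2⟩
      rw [Finset.sum_congr rfl hfib, vand (k + 1) k s]
      congr 1 <;> omega
    have hc2 : (univ.filter (fun p : (Fin (k + 1) → Bool) × (Fin k → Bool) =>
        cf p.2 = cf p.1 + s)).card = (2 * k + 1).choose (k + s + 1) := by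
      rw [Finset.card_eq_sum_card_fiberwise (f := fun p => cf p.1) (t := Finset.range (k + 2))
        (fun p _ => Finset.mem_range.mpr (Nat.lt_succ_of_le (cf_le p.1)))]
      have hfib : ∀ a ∈ Finset.range (k + 2),
          ((univ.filter (fun p : (Fin (k + 1) → Bool) × (Fin k → Bool) =>
            cf p.2 = cf p.1 + s)).filter (fun p => cf p.1 = a)).card
          = k.choose (a + s) * (k + 1).choose a := by
        intro a _
        rw [Finset.filter_filter, mul_comm, ← card_pair_fiber k a (a + s)]
        congr 1
        apply Finset.filter_congr
        intro p _
        constructor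
        · rintro ⟨h1, h2⟩; exact ⟨h2, by omega⟩
        · rintro ⟨h1, h2⟩; exact ⟨by omega, h1⟩
      rw [Finset.sum_congr rfl hfib, vand k (k + 1) s]
      congr 1 <;> omega
    rw [hc1, hc2]
    have hp : (2 * k + 2).choose (k + s + 1)
        = (2 * k + 1).choose (k + s) + (2 * k + 1).choose (k + s + 1) := by
      have h := Nat.choose_succ_succ' (2 * k + 1) (k + s)
      simpa using h
    have hsym : (2 * k + 2).choose (k - s + 1) = (2 * k + 2).choose (k + s + 1) := by
      have h := Nat.choose_symm (n := 2 * k + 2) (k := k + s + 1) (by omega)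
      rw [show 2 * k + 2 - (k + s + 1) = k - s + 1 from by omega] at h
      exact h
    rw [hsym, hp]
  · rw [Finset.disjoint_left]
    intro p h1 h2
    simp only [mem_filter, mem_univ, true_and] at h1 h2
    omega

theorem card_absZ_eq_s_odd_length (k s : ℕ) (hk : 1 ≤ k) (hs1 : 1 ≤ s) (hsk : s ≤ k) :
    (Finset.univ.filter (fun x : Fin (2 * k + 1) → Bool => |Zw (List.ofFn x)| = (s : ℤ))).card =
      Nat.choose (2 * k + 2) (k - s + 1) := by
  rw [← card_pairs k s hs1 hsk]
  have hZ : ∀ x : Fin (2 * k + 1) → Bool,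
      Zw (List.ofFn x) = (cf (fun j : Fin (k + 1) => x ⟨2 * j.val, by omega⟩) : ℤ)
        - (cf (fun j : Fin k => x ⟨2 * j.val + 1, by omega⟩) : ℤ) := by
    intro x
    rw [Zw, oddZeros_ofFn, evenZeros_ofFn, card_even_false, card_odd_false]
  apply Finset.card_bij (fun (x : Fin (2 * k + 1) → Bool) _ =>
    ((fun j : Fin (k + 1) => x ⟨2 * j.val, by omega⟩),
     (fun j : Fin k => x ⟨2 * j.val + 1, by omega⟩)))
  · intro x hx
    simp only [mem_filter, mem_univ, true_and] at hx ⊢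
    rw [hZ x] at hx
    exact hx
  · intro x hx y hy h
    have h1 := congrArg Prod.fst h
    have h2 := congrArg Prod.snd h
    simp only at h1 h2
    funext i
    rcases Nat.even_or_odd i.val with he | ho
    · obtain ⟨m, hm⟩ := he
      have hlt : i.val / 2 < k + 1 := by omega
      have h3 := congrFun h1 ⟨i.val / 2, hlt⟩
      simp only at h3
      have heq : (⟨2 * (i.val / 2), by omega⟩ : Fin (2 * k + 1)) = i := by
        apply Fin.ext
        show 2 * (i.val / 2) = i.val
        omega
      rwa [heq] at h3
    · obtain ⟨m, hm⟩ := ho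
      have hlt : i.val / 2 < k := by omega
      have h3 := congrFun h2 ⟨i.val / 2, hlt⟩
      simp only at h3
      have heq : (⟨2 * (i.val / 2) + 1, by omega⟩ : Fin (2 * k + 1)) = i := by
        apply Fin.ext
        show 2 * (i.val / 2) + 1 = i.val
        omega
      rwa [heq] at h3
  · intro p hp
    simp only [mem_filter, mem_univ, true_and] at hp
    set x : Fin (2 * k + 1) → Bool := fun i =>
      if h : i.val % 2 = 0 then p.1 ⟨i.val / 2, by omega⟩
      else p.2 ⟨i.val / 2, by omega⟩ with hxdef
    have hx1 : (fun j : Fin (k + 1) => x ⟨2 * j.val, by omega⟩) = p.1 := by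
      funext j
      rw [hxdef]
      simp only
      rw [dif_pos (show (⟨2 * j.val, by omega⟩ : Fin (2 * k + 1)).val % 2 = 0 from by
        show 2 * j.val % 2 = 0; omega)]
      exact congrArg p.1 (Fin.ext (show 2 * j.val / 2 = j.val from by omega))
    have hx2 : (fun j : Fin k => x ⟨2 * j.val + 1, by omega⟩) = p.2 := by
      funext j
      rw [hxdef]
      simp only
      rw [dif_neg (show ¬ (⟨2 * j.val + 1, by omega⟩ : Fin (2 * k + 1)).val % 2 = 0 from by
        show ¬ (2 * j.val + 1) % 2 = 0; omega)]
      exact congrArg p.2 (Fin.ext (show (2 * j.val + 1) / 2 = j.val from by omega))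
    refine ⟨x, ?_, ?_⟩
    · simp only [mem_filter, mem_univ, true_and]
      rw [hZ x, hx1, hx2]
      exact hp
    · exact Prod.ext hx1 hx2
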